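/- Let μ^N be a probability measure on ℝ^d×ℝ^d with spatial marginal ρ^N, let ρ be a probability density on ℝ^d, and let u ∈ (L^∞ ∩ Lip)(ℝ^d;ℝ^d). Then the bounded Lipschitz distance between the first velocity moment of μ^N and ρu satisfies: d_BL( ∫_{ℝ^d} v μ^N(·,dv), ρu ) ≤ ( ∫_{ℝ^d×ℝ^d} |v − u(x)|² μ^N(dx,dv) )^{1/2} + C d_BL(ρ^N, ρ), where C > 0 depends only on ‖u‖_{L^∞} and ‖u‖_{Lip}. -/

import Mathlib

open MeasureTheory Set Finset
open scoped ENNReal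

noncomputable section

/-- The bounded Lipschitz distance between two measures. -/
def dBL {α : Type*} [MeasurableSpace α] [PseudoEMetricSpace α]
    (μ ν : Measure α) : ℝ :=
  sSup { r : ℝ | ∃ φ : α → ℝ, (∀ z, |φ z| ≤ 1) ∧ LipschitzWith 1 φ ∧
    r = |(∫ z, φ z ∂μ) - ∫ z, φ z ∂ν| }

/-- The bounded Lipschitz distance between the (vector-valued) first velocity moment
`∫ v μ^N(·,dv)` of a phase-space measure `μ^N` and the momentum `ρ u`, applied
componentwise: the supremum over components `i` and over bounded Lipschitz test
functions `φ` of `|∫ φ(x) v_i μ^N(dx,dv) − ∫ φ(x) ρ(x) u_i(x) dx|`. -/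
def dBLmom1 {d : ℕ} (μ : Measure (EuclideanSpace ℝ (Fin d) × EuclideanSpace ℝ (Fin d)))
    (ρ : EuclideanSpace ℝ (Fin d) → ℝ) (u : EuclideanSpace ℝ (Fin d) → EuclideanSpace ℝ (Fin d)) :
    ℝ :=
  sSup { r : ℝ | ∃ i : Fin d, ∃ φ : EuclideanSpace ℝ (Fin d) → ℝ,
    (∀ z, |φ z| ≤ 1) ∧ LipschitzWith 1 φ ∧
    r = |(∫ z, φ z.1 * z.2 i ∂μ) - ∫ y, φ y * (ρ y * u y i)| }

lemma coord_abs_le_norm {d : ℕ} (a : EuclideanSpace ℝ (Fin d)) (i : Fin d) :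
    |a i| ≤ ‖a‖ := by
  rw [EuclideanSpace.norm_eq, ← Real.sqrt_sq (abs_nonneg (a i))]
  apply Real.sqrt_le_sqrt
  have := Finset.single_le_sum (f := fun j => ‖a j‖ ^ 2)
    (fun j _ => by positivity) (Finset.mem_univ i)
  simpa [Real.norm_eq_abs, sq_abs] using this

lemma integral_le_sqrt_integral_sq {Ω : Type*} [MeasurableSpace Ω] (μ : Measure Ω)
    [IsProbabilityMeasure μ] {f : Ω → ℝ} (h0 : ∀ x, 0 ≤ f x)
    (hm : AEStronglyMeasurable f μ) (hsq : Integrable (fun x => f x ^ 2) μ) :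
    ∫ x, f x ∂μ ≤ Real.sqrt (∫ x, f x ^ 2 ∂μ) := by
  have hmem : MemLp f 2 μ := (memLp_two_iff_integrable_sq hm).2 hsq
  have h := ProbabilityTheory.variance_nonneg f μ
  rw [ProbabilityTheory.variance_eq_sub hmem] at h
  have h2 : (∫ x, f x ∂μ) ^ 2 ≤ ∫ x, f x ^ 2 ∂μ := by
    simp only [Pi.pow_apply] at h
    linarith
  exact (Real.le_sqrt (integral_nonneg h0) (le_trans (by positivity) h2)).2 h2

section dBLlem
variable {α : Type*} [MeasurableSpace α] [PseudoMetricSpace α] [OpensMeasurableSpace α]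
  (μ ν : Measure α) [IsFiniteMeasure μ] [IsFiniteMeasure ν]

set_option linter.unusedSectionVars false

lemma dBL_set_bddAbove :
    BddAbove { r : ℝ | ∃ φ : α → ℝ, (∀ z, |φ z| ≤ 1) ∧ LipschitzWith 1 φ ∧
      r = |(∫ z, φ z ∂μ) - ∫ z, φ z ∂ν| } := by
  refine ⟨(μ Set.univ).toReal + (ν Set.univ).toReal, ?_⟩
  rintro r ⟨φ, hb, hl, rfl⟩
  have key : ∀ (m : Measure α), IsFiniteMeasure m → |∫ z, φ z ∂m| ≤ (m Set.univ).toReal := by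
    intro m hm
    have h1 : |∫ z, φ z ∂m| ≤ ∫ z, |φ z| ∂m := by
      simpa [Real.norm_eq_abs] using norm_integral_le_integral_norm (μ := m) φ
    have h2 : ∫ z, |φ z| ∂m ≤ ∫ _z, (1:ℝ) ∂m :=
      integral_mono_of_nonneg (Filter.Eventually.of_forall fun z => abs_nonneg _)
        (integrable_const 1) (Filter.Eventually.of_forall hb)
    have h3 : ∫ _z, (1:ℝ) ∂m = (m Set.univ).toReal := by simp [Measure.real]
    linarith
  have h4 : |(∫ z, φ z ∂μ) - ∫ z, φ z ∂ν| ≤ |∫ z, φ z ∂μ| + |∫ z, φ z ∂ν| := abs_sub _ _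
  have h5 := key μ inferInstance
  have h6 := key ν inferInstance
  linarith

lemma dBL_nonneg : 0 ≤ dBL μ ν := by
  apply le_csSup (dBL_set_bddAbove μ ν)
  exact ⟨fun _ => 0, fun z => by simp, (LipschitzWith.const 0).weaken zero_le_one, by simp⟩

lemma abs_sub_integral_le_mul_dBL {ψ : α → ℝ} {C : ℝ} (hC : 0 < C)
    (hb : ∀ z, |ψ z| ≤ C) (hl : LipschitzWith C.toNNReal ψ) :
    |(∫ z, ψ z ∂μ) - ∫ z, ψ z ∂ν| ≤ C * dBL μ ν := by
  set φ : α → ℝ := fun z => C⁻¹ * ψ z with hφ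
  have hmem : |(∫ z, φ z ∂μ) - ∫ z, φ z ∂ν| ≤ dBL μ ν := by
    apply le_csSup (dBL_set_bddAbove μ ν)
    refine ⟨φ, fun z => ?_, ?_, rfl⟩
    · rw [hφ, abs_mul, abs_inv, abs_of_pos hC]
      calc C⁻¹ * |ψ z| ≤ C⁻¹ * C := by
            exact mul_le_mul_of_nonneg_left (hb z) (by positivity)
      _ = 1 := inv_mul_cancel₀ hC.ne'
    · apply LipschitzWith.of_dist_le_mul
      intro x y
      have := hl.dist_le_mul x y
      rw [Real.coe_toNNReal _ hC.le] at this
      rw [hφ]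
      simp only [Real.dist_eq, ← mul_sub, abs_mul, abs_inv, abs_of_pos hC]
      rw [← Real.dist_eq]
      calc C⁻¹ * dist (ψ x) (ψ y) ≤ C⁻¹ * (C * dist x y) := by
            exact mul_le_mul_of_nonneg_left this (by positivity)
      _ = 1 * dist x y := by field_simp
  have heq : |(∫ z, φ z ∂μ) - ∫ z, φ z ∂ν| = C⁻¹ * |(∫ z, ψ z ∂μ) - ∫ z, ψ z ∂ν| := by
    rw [hφ]
    simp only [integral_const_mul, ← mul_sub, abs_mul, abs_inv, abs_of_pos hC]
  rw [heq] at hmem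
  calc |(∫ z, ψ z ∂μ) - ∫ z, ψ z ∂ν| = C * (C⁻¹ * |(∫ z, ψ z ∂μ) - ∫ z, ψ z ∂ν|) := by
        field_simp
  _ ≤ C * dBL μ ν := mul_le_mul_of_nonneg_left hmem hC.le

end dBLlem

/-- convergence of the local moment: for a probability measure `μ^N`
on phase space with spatial marginal `ρ^N`, a probability density `ρ`, and a bounded
Lipschitz velocity field `u`,
`d_BL(∫ v μ^N(·,dv), ρu) ≤ (∫∫ |v−u(x)|² μ^N)^{1/2} + C d_BL(ρ^N, ρ)`,
with `C` depending only on `‖u‖_{L^∞}` and `‖u‖_{Lip}`. -/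
theorem local_moment_convergence
    (d : ℕ) (Cu Lu : ℝ) :
    ∃ C : ℝ, 0 < C ∧
      ∀ (μ : Measure (EuclideanSpace ℝ (Fin d) × EuclideanSpace ℝ (Fin d))),
        IsProbabilityMeasure μ →
        Integrable (fun z : EuclideanSpace ℝ (Fin d) × EuclideanSpace ℝ (Fin d) => ‖z.2‖ ^ 2) μ →
      ∀ (ρ : EuclideanSpace ℝ (Fin d) → ℝ),
        (∀ y, 0 ≤ ρ y) → Integrable ρ → (∫ y, ρ y) = 1 →
      ∀ (u : EuclideanSpace ℝ (Fin d) → EuclideanSpace ℝ (Fin d)),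
        (∀ y, ‖u y‖ ≤ Cu) → LipschitzWith (Real.toNNReal Lu) u →
        dBLmom1 μ ρ u
          ≤ Real.sqrt (∫ z, ‖z.2 - u z.1‖ ^ 2 ∂μ)
            + C * dBL (μ.map Prod.fst)
                (volume.withDensity (fun y => ENNReal.ofReal (ρ y))) := by
  refine ⟨|Cu| + |Lu| + 1, by positivity, ?_⟩
  intro μ hμ hμ2 ρ hρ0 hρint hρ1 u hub hul
  set C := |Cu| + |Lu| + 1 with hCdef
  have hCpos : 0 < C := by positivity
  have hCu0 : 0 ≤ Cu := le_trans (norm_nonneg (u 0)) (hub 0)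
  set ν := volume.withDensity (fun y => ENNReal.ofReal (ρ y)) with hν
  have hν1 : ν Set.univ = 1 := by
    rw [hν, withDensity_apply _ MeasurableSet.univ, setLIntegral_univ,
      ← ofReal_integral_eq_lintegral_ofReal hρint (Filter.Eventually.of_forall hρ0), hρ1,
      ENNReal.ofReal_one]
  have hνP : IsProbabilityMeasure ν := ⟨hν1⟩
  have hρN : IsProbabilityMeasure (μ.map Prod.fst) :=
    Measure.isProbabilityMeasure_map measurable_fst.aemeasurable
  have hdBL0 : 0 ≤ dBL (μ.map Prod.fst) ν := dBL_nonneg _ _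
  apply Real.sSup_le
  swap
  · have := Real.sqrt_nonneg (∫ z, ‖z.2 - u z.1‖ ^ 2 ∂μ)
    nlinarith
  rintro r ⟨i, φ, hφb, hφl, rfl⟩
  have hφc : Continuous φ := hφl.continuous
  have huc : Continuous u := hul.continuous
  have hcoordL : LipschitzWith 1 (fun v : EuclideanSpace ℝ (Fin d) => v i) := by
    apply LipschitzWith.of_dist_le_mul
    intro x y
    rw [Real.dist_eq, dist_eq_norm, NNReal.coe_one, one_mul]
    simpa using coord_abs_le_norm (x - y) i
  have hcoord : Continuous (fun v : EuclideanSpace ℝ (Fin d) => v i) := hcoordL.continuous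
  have hui : ∀ x, |u x i| ≤ Cu := fun x => (coord_abs_le_norm (u x) i).trans (hub x)
  have hLu' : ∀ x y, |u x i - u y i| ≤ |Lu| * dist x y := by
    intro x y
    have h1 : |u x i - u y i| ≤ ‖u x - u y‖ := by
      simpa using coord_abs_le_norm (u x - u y) i
    have h2 := hul.dist_le_mul x y
    rw [dist_eq_norm] at h2
    have h3 : (Real.toNNReal Lu : ℝ) ≤ |Lu| := by
      rw [Real.coe_toNNReal']
      exact max_le (le_abs_self _) (abs_nonneg _)
    have h4 : (Real.toNNReal Lu : ℝ) * dist x y ≤ |Lu| * dist x y :=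
      mul_le_mul_of_nonneg_right h3 dist_nonneg
    linarith
  -- Integrability facts
  have h1int : Integrable (fun z : EuclideanSpace ℝ (Fin d) × EuclideanSpace ℝ (Fin d)
      => φ z.1 * z.2 i) μ := by
    apply Integrable.mono' ((integrable_const (1:ℝ)).add hμ2)
    · exact ((hφc.comp continuous_fst).mul (hcoord.comp continuous_snd)).aestronglyMeasurable
    · refine Filter.Eventually.of_forall fun z => ?_
      simp only [Pi.add_apply]
      rw [Real.norm_eq_abs, abs_mul]
      have hb := hφb z.1
      have hc := coord_abs_le_norm z.2 i
      have hn : ‖z.2‖ ≤ 1 + ‖z.2‖ ^ 2 := by nlinarith [norm_nonneg z.2]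
      nlinarith [abs_nonneg (φ z.1), abs_nonneg (z.2 i)]
  have h2int : Integrable (fun z : EuclideanSpace ℝ (Fin d) × EuclideanSpace ℝ (Fin d)
      => φ z.1 * u z.1 i) μ := by
    apply Integrable.mono' (integrable_const Cu)
    · exact ((hφc.mul (hcoord.comp huc)).comp continuous_fst).aestronglyMeasurable
    · refine Filter.Eventually.of_forall fun z => ?_
      rw [Real.norm_eq_abs, abs_mul]
      have hb := hφb z.1
      have hc := hui z.1
      nlinarith [abs_nonneg (φ z.1), abs_nonneg (u z.1 i)]
  have hw2 : Integrable (fun z : EuclideanSpace ℝ (Fin d) × EuclideanSpace ℝ (Fin d)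
      => ‖z.2 - u z.1‖ ^ 2) μ := by
    apply Integrable.mono' ((hμ2.const_mul 2).add (integrable_const (2 * Cu ^ 2)))
    · exact ((continuous_snd.sub (huc.comp continuous_fst)).norm.pow 2).aestronglyMeasurable
    · refine Filter.Eventually.of_forall fun z => ?_
      simp only [Pi.add_apply]
      rw [Real.norm_eq_abs, abs_of_nonneg (by positivity)]
      have h1 : ‖z.2 - u z.1‖ ≤ ‖z.2‖ + Cu :=
        (norm_sub_le _ _).trans (by linarith [hub z.1])
      have h2 : ‖z.2 - u z.1‖ ^ 2 ≤ (‖z.2‖ + Cu) ^ 2 :=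
        pow_le_pow_left₀ (norm_nonneg _) h1 2
      nlinarith [sq_nonneg (‖z.2‖ - Cu)]
  have hw1 : Integrable (fun z : EuclideanSpace ℝ (Fin d) × EuclideanSpace ℝ (Fin d)
      => ‖z.2 - u z.1‖) μ := by
    apply Integrable.mono' ((integrable_const (1:ℝ)).add hw2)
    · exact (continuous_snd.sub (huc.comp continuous_fst)).norm.aestronglyMeasurable
    · refine Filter.Eventually.of_forall fun z => ?_
      simp only [Pi.add_apply]
      rw [Real.norm_eq_abs, abs_of_nonneg (norm_nonneg _)]
      nlinarith [norm_nonneg (z.2 - u z.1)]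
  -- Step 1 : |A - B| ≤ sqrt(∫ ‖v - u x‖²)
  have hAB : |(∫ z, φ z.1 * z.2 i ∂μ) - ∫ z, φ z.1 * u z.1 i ∂μ|
      ≤ Real.sqrt (∫ z, ‖z.2 - u z.1‖ ^ 2 ∂μ) := by
    rw [← integral_sub h1int h2int]
    have hpt : ∀ z : EuclideanSpace ℝ (Fin d) × EuclideanSpace ℝ (Fin d),
        |φ z.1 * z.2 i - φ z.1 * u z.1 i| ≤ ‖z.2 - u z.1‖ := by
      intro z
      rw [← mul_sub, abs_mul]
      have hc : |z.2 i - u z.1 i| ≤ ‖z.2 - u z.1‖ := by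
        simpa using coord_abs_le_norm (z.2 - u z.1) i
      have hb := hφb z.1
      nlinarith [abs_nonneg (φ z.1), abs_nonneg (z.2 i - u z.1 i)]
    have hstep1 : |∫ z, (φ z.1 * z.2 i - φ z.1 * u z.1 i) ∂μ|
        ≤ ∫ z, ‖z.2 - u z.1‖ ∂μ := by
      have hn := norm_integral_le_integral_norm (μ := μ)
        (fun z => φ z.1 * z.2 i - φ z.1 * u z.1 i)
      refine le_trans (by simpa [Real.norm_eq_abs] using hn) ?_
      exact integral_mono_of_nonneg (Filter.Eventually.of_forall fun z => abs_nonneg _)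
        hw1 (Filter.Eventually.of_forall hpt)
    refine hstep1.trans (integral_le_sqrt_integral_sq μ (fun z => norm_nonneg _)
      (continuous_snd.sub (huc.comp continuous_fst)).norm.aestronglyMeasurable hw2)
  -- Step 2 : rewrite the two spatial integrals
  set ψ : EuclideanSpace ℝ (Fin d) → ℝ := fun y => φ y * u y i with hψ
  have hψc : Continuous ψ := hφc.mul (hcoord.comp huc)
  have hmap : (∫ z, φ z.1 * u z.1 i ∂μ) = ∫ y, ψ y ∂(μ.map Prod.fst) := by
    rw [integral_map measurable_fst.aemeasurable hψc.aestronglyMeasurable]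
  have hD : (∫ y, φ y * (ρ y * u y i)) = ∫ y, ψ y ∂ν := by
    rw [hν]
    have hmeas : AEMeasurable (fun y => (ρ y).toNNReal) volume :=
      measurable_real_toNNReal.comp_aemeasurable hρint.aemeasurable
    rw [show (fun y => ENNReal.ofReal (ρ y)) = fun y => ((ρ y).toNNReal : ℝ≥0∞) from rfl]
    rw [integral_withDensity_eq_integral_smul₀ hmeas ψ]
    apply integral_congr_ae
    refine Filter.Eventually.of_forall fun y => ?_
    rw [hψ]
    simp only [NNReal.smul_def, smul_eq_mul, Real.coe_toNNReal _ (hρ0 y)]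
    ring
  -- Step 3 : |B - D| ≤ C * dBL
  have hBD : |(∫ y, ψ y ∂(μ.map Prod.fst)) - ∫ y, ψ y ∂ν|
      ≤ C * dBL (μ.map Prod.fst) ν := by
    apply abs_sub_integral_le_mul_dBL _ _ hCpos
    · intro z
      rw [hψ, abs_mul]
      have hb := hφb z
      have hc := hui z
      have : |φ z| * |u z i| ≤ 1 * Cu := by
        apply mul_le_mul hb hc (abs_nonneg _) zero_le_one
      rw [one_mul] at this
      refine this.trans ?_
      rw [hCdef]
      have := le_abs_self Cu
      have := abs_nonneg Lu
      linarith
    · apply LipschitzWith.of_dist_le_mul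
      intro x y
      rw [Real.coe_toNNReal _ hCpos.le, hψ]
      simp only [Real.dist_eq]
      have e : φ x * u x i - φ y * u y i
          = φ x * (u x i - u y i) + u y i * (φ x - φ y) := by ring
      rw [e]
      have h1 : |φ x * (u x i - u y i)| ≤ |Lu| * dist x y := by
        rw [abs_mul]
        calc |φ x| * |u x i - u y i| ≤ 1 * (|Lu| * dist x y) :=
              mul_le_mul (hφb x) (hLu' x y) (abs_nonneg _) zero_le_one
        _ = |Lu| * dist x y := one_mul _
      have h2 : |u y i * (φ x - φ y)| ≤ Cu * dist x y := by
        rw [abs_mul]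
        have hφd := hφl.dist_le_mul x y
        rw [NNReal.coe_one, one_mul, Real.dist_eq] at hφd
        exact mul_le_mul (hui y) hφd (abs_nonneg _) hCu0
      have h3 : |φ x * (u x i - u y i) + u y i * (φ x - φ y)|
          ≤ |Lu| * dist x y + Cu * dist x y := (abs_add_le _ _).trans (add_le_add h1 h2)
      refine h3.trans ?_
      rw [hCdef]
      have hd := dist_nonneg (x := x) (y := y)
      have := le_abs_self Cu
      nlinarith
  -- Conclusion
  have htri : |(∫ z, φ z.1 * z.2 i ∂μ) - ∫ y, φ y * (ρ y * u y i)|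
      ≤ |(∫ z, φ z.1 * z.2 i ∂μ) - ∫ z, φ z.1 * u z.1 i ∂μ|
        + |(∫ z, φ z.1 * u z.1 i ∂μ) - ∫ y, φ y * (ρ y * u y i)| := abs_sub_le _ _ _
  rw [hmap, hD] at htri
  rw [hmap] at hAB
  rw [hD]
  linarith [htri, hAB, hBD]
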